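/- Let F : C → D be a functor with a simultaneous left and right adjoint G : D → C, with 2-morphisms r : Id_C → GF, s : FG → Id_D (from F ⊣ G) and p : Id_D → FG, q : GF → Id_C (from G ⊣ F). Then T = GF with m = GsF, η = r, Δ = GpF, ε = q is a Frobenius algebra in End(C): (T, m, η) is a monad, (T, Δ, ε) is a comonad, and (id_T ⊗ m) ∘ (Δ ⊗ id_T) = Δ ∘ m = (m ⊗ id_T) ∘ (id_T ⊗ Δ). -/

import Mathlib

open CategoryTheory

/-- If `G` is a simultaneous left and right adjoint of `F` (with `F ⊣ G` given by unit `r`,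
counit `s`, and `G ⊣ F` given by unit `p`, counit `q`), then `T = GF` with `m = GsF`,
`η = r`, `Δ = GpF`, `ε = q` is a Frobenius algebra in the endofunctor category of `C`:
`(T, m, η)` is a monad, `(T, Δ, ε)` is a comonad, and the Frobenius condition
`(id ⊗ m) ∘ (Δ ⊗ id) = Δ ∘ m = (m ⊗ id) ∘ (id ⊗ Δ)` holds (stated componentwise). -/
theorem two_sided_adjoint_gives_frobenius_monad
    {C D : Type*} [Category C] [Category D]
    (F : C ⥤ D) (G : D ⥤ C) (adj₁ : F ⊣ G) (adj₂ : G ⊣ F) :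
    -- `(T, m, η)` is a monad:
    ((∀ X : C,
        G.map (F.map (G.map (adj₁.counit.app (F.obj X)))) ≫ G.map (adj₁.counit.app (F.obj X))
          = G.map (adj₁.counit.app (F.obj (G.obj (F.obj X))))
              ≫ G.map (adj₁.counit.app (F.obj X))) ∧
      (∀ X : C,
        adj₁.unit.app (G.obj (F.obj X)) ≫ G.map (adj₁.counit.app (F.obj X))
          = 𝟙 (G.obj (F.obj X))) ∧
      (∀ X : C,
        G.map (F.map (adj₁.unit.app X)) ≫ G.map (adj₁.counit.app (F.obj X))
          = 𝟙 (G.obj (F.obj X)))) ∧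
    -- `(T, Δ, ε)` is a comonad:
    ((∀ X : C,
        G.map (adj₂.unit.app (F.obj X)) ≫ G.map (F.map (G.map (adj₂.unit.app (F.obj X))))
          = G.map (adj₂.unit.app (F.obj X))
              ≫ G.map (adj₂.unit.app (F.obj (G.obj (F.obj X))))) ∧
      (∀ X : C,
        G.map (adj₂.unit.app (F.obj X)) ≫ adj₂.counit.app (G.obj (F.obj X))
          = 𝟙 (G.obj (F.obj X))) ∧
      (∀ X : C,
        G.map (adj₂.unit.app (F.obj X)) ≫ G.map (F.map (adj₂.counit.app X))
          = 𝟙 (G.obj (F.obj X)))) ∧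
    -- the Frobenius condition `(id_T ⊗ m) ∘ (Δ ⊗ id_T) = Δ ∘ m = (m ⊗ id_T) ∘ (id_T ⊗ Δ)`:
    ((∀ X : C,
        G.map (adj₁.counit.app (F.obj X)) ≫ G.map (adj₂.unit.app (F.obj X))
          = G.map (F.map (G.map (adj₂.unit.app (F.obj X))))
              ≫ G.map (adj₁.counit.app (F.obj (G.obj (F.obj X))))) ∧
      (∀ X : C,
        G.map (adj₁.counit.app (F.obj X)) ≫ G.map (adj₂.unit.app (F.obj X))
          = G.map (adj₂.unit.app (F.obj (G.obj (F.obj X))))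
              ≫ G.map (F.map (G.map (adj₁.counit.app (F.obj X)))))) := by
  refine ⟨⟨fun X => ?_, fun X => ?_, fun X => ?_⟩,
    ⟨fun X => ?_, fun X => ?_, fun X => ?_⟩, fun X => ?_, fun X => ?_⟩
  · rw [← G.map_comp, ← G.map_comp]
    congr 1
    exact adj₁.counit.naturality (adj₁.counit.app (F.obj X))
  · exact adj₁.right_triangle_components _
  · rw [← G.map_comp]; simp
  · rw [← G.map_comp, ← G.map_comp]
    congr 1
    have := adj₂.unit.naturality (adj₂.unit.app (F.obj X))
    simpa using this.symm
  · exact adj₂.left_triangle_components _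
  · rw [← G.map_comp, adj₂.right_triangle_components]; exact G.map_id _
  · rw [← G.map_comp, ← G.map_comp]
    congr 1
    have := adj₁.counit.naturality (adj₂.unit.app (F.obj X))
    simpa using this.symm
  · rw [← G.map_comp, ← G.map_comp]
    congr 1
    have := adj₂.unit.naturality (adj₁.counit.app (F.obj X))
    simpa using this
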